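/- The set of non-crossing partitions of a finite subset x of ℂ, ordered by refinement, is a lattice, with meet operation inherited from the lattice of all set partitions of x. -/

import Mathlib

open Set

noncomputable section
open scoped Classical

/-- `u` is a set-theoretical partition of the set `x ⊆ ℂ`. -/
def IsPartitionOf (x : Set ℂ) (u : Set (Set ℂ)) : Prop :=
  (∀ a ∈ u, a.Nonempty ∧ a ⊆ x) ∧ ∀ z ∈ x, ∃! a, a ∈ u ∧ z ∈ a

/-- The refinement order on partitions. -/
def Refines (u v : Set (Set ℂ)) : Prop :=
  ∀ a ∈ u, ∃ b ∈ v, a ⊆ b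

/-- A partition is non-crossing if the convex hulls of two parts can only meet
when the parts are equal. -/
def IsNoncrossing (u : Set (Set ℂ)) : Prop :=
  ∀ a ∈ u, ∀ b ∈ u, (convexHull ℝ a ∩ convexHull ℝ b).Nonempty → a = b

/-- The set-theoretical meet of two partitions: parts are the nonempty
intersections of parts. -/
def meetParts (u v : Set (Set ℂ)) : Set (Set ℂ) :=
  {s | s.Nonempty ∧ ∃ a ∈ u, ∃ b ∈ v, s = a ∩ b}

/-- The set of `n`-th roots of unity. -/
def mu (n : ℕ) : Set ℂ := {z : ℂ | z ^ n = 1}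

/-- `ζ_n = exp(2iπ/n)`. -/
def zeta (n : ℕ) : ℂ := Complex.exp (2 * (Real.pi : ℂ) * Complex.I / (n : ℂ))

/-- Multiplication of a partition by a complex constant. -/
def rotate (c : ℂ) (u : Set (Set ℂ)) : Set (Set ℂ) :=
  (fun a => (fun z => c * z) '' a) '' u

/-- Invariance of a partition under multiplication by the group `μ_e`. -/
def MuInvariant (e : ℕ) (u : Set (Set ℂ)) : Prop :=
  ∀ ζ : ℂ, ζ ^ e = 1 → rotate ζ u = u

/-- `NCP(e,1,n)`: non-crossing partitions of `μ_{en}` fixed by the `μ_e`-action. -/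
def NCPmu (e n : ℕ) : Set (Set (Set ℂ)) :=
  {u | IsPartitionOf (mu (e * n)) u ∧ IsNoncrossing u ∧ MuInvariant e u}

/-- A partition is long if `0` lies in the convex hull of one of its parts. -/
def IsLong (u : Set (Set ℂ)) : Prop :=
  ∃ a ∈ u, (0 : ℂ) ∈ convexHull ℝ a

/-- The partition `u^♭` obtained by forgetting `0`. -/
def flatNCP (u : Set (Set ℂ)) : Set (Set ℂ) :=
  {s | s.Nonempty ∧ ∃ a ∈ u, s = a \ {0}}

/-- `NCP(e,e,n+1)`: non-crossing partitions of `μ_{en} ∪ {0}` such that the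
partition obtained by forgetting `0` is `μ_e`-invariant. -/
def NCPee (e n : ℕ) : Set (Set (Set ℂ)) :=
  {u | IsPartitionOf (insert 0 (mu (e * n))) u ∧ IsNoncrossing u ∧
    MuInvariant e (flatNCP u)}

/-- The trivial (one-block) partition of `μ_{en} ∪ {0}`. -/
def trivEE (e n : ℕ) : Set (Set ℂ) := {insert 0 (mu (e * n))}

/-- The discrete partition of `μ_n`. -/
def discMu (n : ℕ) : Set (Set ℂ) := {s | ∃ z ∈ mu n, s = {z}}

/-- `z'` is the counterclockwise successor of `z` on the boundary of the convex
set `b` (all remaining points of `b` are strictly on the left of the directed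
line from `z` to `z'`). -/
def ccwSucc (b : Set ℂ) (z z' : ℂ) : Prop :=
  z ∈ b ∧ z' ∈ b ∧ z ≠ z' ∧
    ∀ w ∈ b, w ≠ z → w ≠ z' →
      0 < ((z' - z).re * (w - z).im - (z' - z).im * (w - z).re)

/-- `σ` is the permutation associated with a partition `u` (of a set in convex
position), sending each element of a part to its counterclockwise successor in
that part. -/
def IsSuccMapOn (u : Set (Set ℂ)) (σ : ℂ → ℂ) : Prop :=
  ∀ b ∈ u, ∀ z ∈ b, (b = {z} → σ z = z) ∧ (b ≠ {z} → ccwSucc b z (σ z))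

/-- Restriction of a partition to the subset `X`. -/
def resTo (X : Set ℂ) (u : Set (Set ℂ)) : Set (Set ℂ) :=
  {s | s.Nonempty ∧ ∃ a ∈ u, s = a ∩ X}

/-- `w` is the (classical) Kreweras complement of `u` in `v`, for partitions of
a subset `X ⊆ ℂ` in convex position: it is characterized by
`σ_u σ_w = σ_v` (composition of motions). -/
def KrewRel (X : Set ℂ) (u v w : Set (Set ℂ)) : Prop :=
  Refines u v ∧ Refines w v ∧
    ∃ σu σv σw : ℂ → ℂ, IsSuccMapOn u σu ∧ IsSuccMapOn v σv ∧ IsSuccMapOn w σw ∧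
      ∀ z ∈ X, σw (σu z) = σv z

/-- An element of `NCP(e,e,n+1)` is symmetric if `{0}` is a part (short
symmetric) or its flat is long (long symmetric); otherwise it is asymmetric. -/
def SymmPart (u : Set (Set ℂ)) : Prop :=
  ({0} : Set ℂ) ∈ u ∨ IsLong (flatNCP u)

/-- The map `* : NCP(e,1,n) → NCP(e,e,n+1)`: add `{0}` as a singleton part if
`u` is short, add `0` to the long part if `u` is long. -/
def starNCP (u : Set (Set ℂ)) : Set (Set ℂ) :=
  if IsLong u then
    {s | ∃ a ∈ u, s = if (0 : ℂ) ∈ convexHull ℝ a then insert 0 a else a}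
  else insert {(0 : ℂ)} u

/-- The part of `v` containing `0`. -/
def asymPart (v : Set (Set ℂ)) : Set ℂ := ⋃₀ {a ∈ v | (0 : ℂ) ∈ a}

/-- The union `ã` of the `μ_e`-orbit of the part of `v` containing `0`
(with `0` removed). -/
def tildePart (e : ℕ) (v : Set (Set ℂ)) : Set ℂ :=
  ⋃ ζ ∈ {z : ℂ | z ^ e = 1}, (fun z => ζ * z) '' (asymPart v \ {0})

/-- The map `♯ : NCP(e,e,n+1) → NCP(e,1,n)`. -/
def sharpNCP (e : ℕ) (v : Set (Set ℂ)) : Set (Set ℂ) :=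
  if SymmPart v then flatNCP v
  else insert (tildePart e v) {b ∈ flatNCP v | ¬ b ⊆ tildePart e v}

/-- The minimal asymmetric partition `m_ζ`, with only non-singleton part `{0, ζ}`. -/
def mzeta (e n : ℕ) (ζ : ℂ) : Set (Set ℂ) :=
  insert {0, ζ} {s | ∃ z ∈ mu (e * n), z ≠ ζ ∧ s = {z}}

/-- The set `a_ζ = {0, ζ_{en}ζ, ζ_{en}²ζ, …, ζ_{en}ⁿζ}`. -/
def azeta (e n : ℕ) (ζ : ℂ) : Set ℂ :=
  insert 0 {z : ℂ | ∃ k : ℕ, 1 ≤ k ∧ k ≤ n ∧ z = zeta (e * n) ^ k * ζ}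

/-- The maximal asymmetric partition `M_ζ`, with asymmetric part `a_ζ` and
remaining parts `ζ' a_ζ ∖ {0}` for `ζ' ∈ μ_e ∖ {1}`. -/
def Mzeta (e n : ℕ) (ζ : ℂ) : Set (Set ℂ) :=
  insert (azeta e n ζ)
    {s | ∃ ζ' : ℂ, ζ' ^ e = 1 ∧ ζ' ≠ 1 ∧ s = (fun z => ζ' * z) '' (azeta e n ζ \ {0})}

/-- `w` is the complement `u\v` of `u` in `v`, in `NCP(e,e,n+1)`, following the
three cases of the definition: (A) both symmetric, computed through the flats
in `NCP(e,1,n)`; (B) `v` asymmetric, computed in some interval `[disc, M_ζ]`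
through restriction to `a_ζ`; (C) `u` asymmetric, computed through the
isomorphisms `ψ_ζ` and `φ_ζ` with the non-crossing partitions of `a_ζ`. -/
def IsComplEE (e n : ℕ) (u v w : Set (Set ℂ)) : Prop :=
  Refines u v ∧
    ((SymmPart u ∧ SymmPart v ∧
        ∃ k, KrewRel (mu (e * n)) (flatNCP u) (flatNCP v) k ∧ w = starNCP k) ∨
     (¬ SymmPart v ∧ ∃ ζ : ℂ, ζ ^ (e * n) = 1 ∧ Refines v (Mzeta e n ζ) ∧
        Refines w (Mzeta e n ζ) ∧
        KrewRel (azeta e n ζ) (resTo (azeta e n ζ) u) (resTo (azeta e n ζ) v)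
          (resTo (azeta e n ζ) w)) ∨
     (¬ SymmPart u ∧ ∃ ζ : ℂ, ζ ^ (e * n) = 1 ∧ Refines (mzeta e n ζ) u ∧
        Refines w (Mzeta e n ζ) ∧
        KrewRel (azeta e n ζ) (resTo (azeta e n ζ) u) (resTo (azeta e n ζ) v)
          (resTo (azeta e n ζ) w)))

/-- Height of an element of `NCP(e,e,n+1)` with `m` parts: `n - (m-1)/e` in the
short symmetric case, `n+1 - (m-1)/e` in the long symmetric case,
`n+1 - m/e` in the asymmetric case. -/
def htEE (e n : ℕ) (u : Set (Set ℂ)) : ℤ :=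
  if ({0} : Set ℂ) ∈ u then (n : ℤ) - ((u.ncard : ℤ) - 1) / (e : ℤ)
  else if IsLong (flatNCP u) then (n : ℤ) + 1 - ((u.ncard : ℤ) - 1) / (e : ℤ)
  else (n : ℤ) + 1 - (u.ncard : ℤ) / (e : ℤ)

/-- The height-one symmetric partition `u_{p,q}`, with non-singleton parts the
`e` rotates `ζ_e^i {ζ_{ne}^p, ζ_{ne}^q}`. -/
def upq (e n : ℕ) (p q : ℤ) : Set (Set ℂ) :=
  {s | ∃ ζ : ℂ, ζ ^ e = 1 ∧ s = {ζ * zeta (e * n) ^ p, ζ * zeta (e * n) ^ q}} ∪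
    {s | ∃ z ∈ insert (0 : ℂ) (mu (e * n)), s = {z} ∧
      ∀ ζ : ℂ, ζ ^ e = 1 → z ≠ ζ * zeta (e * n) ^ p ∧ z ≠ ζ * zeta (e * n) ^ q}

/-- The height-one asymmetric partition `u_p`, with unique non-singleton part
`{0, ζ_{en}^p}`. -/
def upt (e n : ℕ) (p : ℤ) : Set (Set ℂ) :=
  insert {0, zeta (e * n) ^ p}
    {s | ∃ z ∈ mu (e * n), z ≠ zeta (e * n) ^ p ∧ s = {z}}

/-- A weakly increasing chain of length `N` in a set `S` of partitions. -/
def IsChainOf (S : Set (Set (Set ℂ))) (N : ℕ) (c : Fin N → Set (Set ℂ)) : Prop :=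
  (∀ i, c i ∈ S) ∧ ∀ i j : Fin N, i ≤ j → Refines (c i) (c j)

private lemma meet_isPartition {x : Set ℂ} {u v : Set (Set ℂ)}
    (hu : IsPartitionOf x u) (hv : IsPartitionOf x v) :
    IsPartitionOf x (meetParts u v) := by
  constructor
  · rintro s ⟨hs, a, ha, b, hb, rfl⟩
    exact ⟨hs, inter_subset_left.trans (hu.1 a ha).2⟩
  · intro z hz
    obtain ⟨a, ⟨hau, hza⟩, hauniq⟩ := hu.2 z hz
    obtain ⟨b, ⟨hbv, hzb⟩, hbuniq⟩ := hv.2 z hz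
    refine ⟨a ∩ b, ⟨⟨⟨z, hza, hzb⟩, a, hau, b, hbv, rfl⟩, hza, hzb⟩, ?_⟩
    rintro s ⟨⟨hs, a', ha', b', hb', rfl⟩, hz1, hz2⟩
    rw [hauniq a' ⟨ha', hz1⟩, hbuniq b' ⟨hb', hz2⟩]

private lemma meet_noncrossing {u v : Set (Set ℂ)}
    (hu' : IsNoncrossing u) (hv' : IsNoncrossing v) :
    IsNoncrossing (meetParts u v) := by
  rintro s ⟨hs, a, ha, b, hb, rfl⟩ t ⟨ht, a', ha', b', hb', rfl⟩ ⟨z, hz1, hz2⟩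
  have h1 : a = a' := hu' a ha a' ha'
    ⟨z, convexHull_mono inter_subset_left hz1, convexHull_mono inter_subset_left hz2⟩
  have h2 : b = b' := hv' b hb b' hb'
    ⟨z, convexHull_mono inter_subset_right hz1, convexHull_mono inter_subset_right hz2⟩
  rw [h1, h2]

private lemma refines_meet {x : Set ℂ} {w u v : Set (Set ℂ)} (hw : IsPartitionOf x w)
    (h1 : Refines w u) (h2 : Refines w v) : Refines w (meetParts u v) := by
  intro c hc
  obtain ⟨a, ha, hca⟩ := h1 c hc
  obtain ⟨b, hb, hcb⟩ := h2 c hc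
  exact ⟨a ∩ b, ⟨(hw.1 c hc).1.mono (subset_inter hca hcb), a, ha, b, hb, rfl⟩,
    subset_inter hca hcb⟩

private lemma part_finite {x : Set ℂ} {u : Set (Set ℂ)} (hx : x.Finite)
    (hu : IsPartitionOf x u) : u.Finite :=
  hx.finite_subsets.subset fun a ha => (hu.1 a ha).2

private lemma refines_key {x : Set ℂ} {u v : Set (Set ℂ)} (hx : x.Finite)
    (hu : IsPartitionOf x u) (hv : IsPartitionOf x v) (h : Refines u v) :
    v.ncard ≤ u.ncard ∧ (u.ncard ≤ v.ncard → u = v) := by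
  classical
  have hchoose : ∀ a : Set ℂ, ∃ b, a ∈ u → b ∈ v ∧ a ⊆ b := by
    intro a
    by_cases ha : a ∈ u
    · obtain ⟨b, hb, hab⟩ := h a ha
      exact ⟨b, fun _ => ⟨hb, hab⟩⟩
    · exact ⟨∅, fun h' => absurd h' ha⟩
  choose f hf using hchoose
  have hsurj : SurjOn f u v := by
    rintro b hb
    obtain ⟨z, hz⟩ := (hv.1 b hb).1
    have hzx : z ∈ x := (hv.1 b hb).2 hz
    obtain ⟨a, ⟨ha, hza⟩, -⟩ := hu.2 z hzx
    obtain ⟨b', ⟨hb', hzb'⟩, huniq⟩ := hv.2 z hzx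
    have h1 : b = b' := huniq b ⟨hb, hz⟩
    have h2 : f a = b' := huniq (f a) ⟨(hf a ha).1, (hf a ha).2 hza⟩
    exact ⟨a, ha, by rw [h2, ← h1]⟩
  have hufin : u.Finite := part_finite hx hu
  have hle : v.ncard ≤ u.ncard := by
    calc v.ncard ≤ (f '' u).ncard := ncard_le_ncard hsurj (hufin.image f)
    _ ≤ u.ncard := ncard_image_le hufin
  refine ⟨hle, fun hle2 => ?_⟩
  have hinj : InjOn f u := by
    intro a₁ ha₁ a₂ ha₂ heq
    exact inj_on_of_surj_on_of_ncard_le (t := v) (fun a _ => f a)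
      (fun a ha => (hf a ha).1) (fun b hb => by
        obtain ⟨a, ha, rfl⟩ := hsurj hb; exact ⟨a, ha, rfl⟩)
      hle2 ha₁ ha₂ heq hufin
  have hvu : ∀ b ∈ v, b ∈ u := by
    intro b hb
    obtain ⟨a, ha, rfl⟩ := hsurj hb
    have hba : f a ⊆ a := by
      intro z hz
      have hzx : z ∈ x := (hv.1 _ (hf a ha).1).2 hz
      obtain ⟨a', ⟨ha', hza'⟩, -⟩ := hu.2 z hzx
      obtain ⟨b', ⟨hb', hzb'⟩, huniq⟩ := hv.2 z hzx
      have e1 : f a' = b' := huniq (f a') ⟨(hf a' ha').1, (hf a' ha').2 hza'⟩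
      have e2 : f a = b' := huniq (f a) ⟨(hf a ha).1, hz⟩
      have : a' = a := hinj ha' ha (by rw [e1, e2])
      rwa [← this]
    have : f a = a := Subset.antisymm hba ((hf a ha).2)
    rwa [this]
  apply Subset.antisymm _ hvu
  intro a ha
  obtain ⟨z, hza⟩ := (hu.1 a ha).1
  have hzx : z ∈ x := (hu.1 a ha).2 hza
  obtain ⟨b, ⟨hb, hzb⟩, -⟩ := hv.2 z hzx
  obtain ⟨a', ⟨ha', hza'⟩, huniq⟩ := hu.2 z hzx
  have e1 : a = a' := huniq a ⟨ha, hza⟩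
  have e2 : b = a' := huniq b ⟨hvu b hb, hzb⟩
  rwa [e1, ← e2]

/-- The set of non-crossing partitions of a finite subset `x ⊆ ℂ`, ordered by
refinement, is a lattice, with meet inherited from the lattice of all set
partitions of `x`. -/
theorem stmt1 (x : Set ℂ) (hx : x.Finite) (u v : Set (Set ℂ))
    (hu : IsPartitionOf x u) (hu' : IsNoncrossing u)
    (hv : IsPartitionOf x v) (hv' : IsNoncrossing v) :
    (IsPartitionOf x (meetParts u v) ∧ IsNoncrossing (meetParts u v) ∧
      Refines (meetParts u v) u ∧ Refines (meetParts u v) v ∧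
      ∀ w, IsPartitionOf x w → IsNoncrossing w → Refines w u → Refines w v →
        Refines w (meetParts u v)) ∧
    (∃ j, IsPartitionOf x j ∧ IsNoncrossing j ∧ Refines u j ∧ Refines v j ∧
      ∀ w, IsPartitionOf x w → IsNoncrossing w → Refines u w → Refines v w →
        Refines j w) := by
  classical
  have hmeet_left : ∀ u' v' : Set (Set ℂ), Refines (meetParts u' v') u' := by
    rintro u' v' s ⟨hs, a, ha, b, hb, rfl⟩
    exact ⟨a, ha, inter_subset_left⟩
  have hmeet_right : ∀ u' v' : Set (Set ℂ), Refines (meetParts u' v') v' := by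
    rintro u' v' s ⟨hs, a, ha, b, hb, rfl⟩
    exact ⟨b, hb, inter_subset_right⟩
  refine ⟨⟨meet_isPartition hu hv, meet_noncrossing hu' hv', hmeet_left u v,
    hmeet_right u v, fun w hw _ h1 h2 => refines_meet hw h1 h2⟩, ?_⟩
  -- join
  set S : Set (Set (Set ℂ)) :=
    {w | IsPartitionOf x w ∧ IsNoncrossing w ∧ Refines u w ∧ Refines v w} with hS
  have hSfin : S.Finite :=
    hx.finite_subsets.finite_subsets.subset fun w hw a ha => (hw.1.1 a ha).2
  have htop : {a | a = x ∧ x.Nonempty} ∈ S := by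
    refine ⟨⟨?_, ?_⟩, ?_, ?_, ?_⟩
    · rintro a ⟨rfl, hne⟩
      exact ⟨hne, Subset.rfl⟩
    · intro z hz
      refine ⟨x, ⟨⟨rfl, ⟨z, hz⟩⟩, hz⟩, ?_⟩
      rintro a ⟨⟨rfl, -⟩, -⟩
      rfl
    · rintro a ⟨rfl, -⟩ b ⟨rfl, -⟩ -
      rfl
    · intro a ha
      exact ⟨x, ⟨rfl, (hu.1 a ha).1.mono (hu.1 a ha).2⟩, (hu.1 a ha).2⟩
    · intro a ha
      exact ⟨x, ⟨rfl, (hv.1 a ha).1.mono (hv.1 a ha).2⟩, (hv.1 a ha).2⟩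
  obtain ⟨j, hjS, hjmax⟩ :=
    hSfin.exists_maximalFor (fun w => w.ncard) S (Set.nonempty_of_mem htop)
  refine ⟨j, hjS.1, hjS.2.1, hjS.2.2.1, hjS.2.2.2, ?_⟩
  intro w hw hw' h1 h2
  have hmS : meetParts j w ∈ S :=
    ⟨meet_isPartition hjS.1 hw, meet_noncrossing hjS.2.1 hw',
      refines_meet hu hjS.2.2.1 h1, refines_meet hv hjS.2.2.2 h2⟩
  have hkey := refines_key hx (meet_isPartition hjS.1 hw) hjS.1 (hmeet_left j w)
  have hcard : j.ncard = (meetParts j w).ncard := le_antisymm hkey.1 (hjmax hmS hkey.1)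
  have : meetParts j w = j := hkey.2 (le_of_eq hcard.symm)
  rw [← this]
  exact hmeet_right j w
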